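/- For α, β > 0 with αβ = 1/(2n) for a positive integer n, and any real γ, the double series B(γ) = 2n · Σ_{k,l∈ℤ} exp(-(π/2)(k²/β² + (l/α + kγ/β)²)) satisfies B(γ) = 2n√2·α · Σ_{k,l∈ℤ} exp(-2πα²(l² + k²n²)) · cos(2πkl(α/β)γ). -/

import Mathlib

open Real

lemma gauss_summable {c : ℝ} (hc : 0 < c) :
    Summable fun m : ℤ ↦ Real.exp (-c * (m : ℝ) ^ 2) := by
  have hnat : Summable fun m : ℕ ↦ Real.exp (-c * (m : ℝ) ^ 2) := by
    refine Summable.of_nonneg_of_le (fun m ↦ (Real.exp_pos _).le) (fun m ↦ ?_)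
      (summable_geometric_of_lt_one (Real.exp_pos (-c)).le
        (Real.exp_lt_one_iff.mpr (neg_neg_iff_pos.mpr hc)))
    rw [← Real.exp_nat_mul]
    apply Real.exp_le_exp.mpr
    have h1 : (m : ℝ) ≤ (m : ℝ) ^ 2 := by
      exact_mod_cast Nat.cast_le.mpr (Nat.le_self_pow two_ne_zero m)
    nlinarith
  refine Summable.of_nat_of_neg (hnat.congr fun m ↦ by push_cast; ring_nf)
    (hnat.congr fun m ↦ by push_cast; ring_nf)

lemma gauss_shift_summable {c : ℝ} (hc : 0 < c) (x : ℝ) :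
    Summable fun m : ℤ ↦ Real.exp (-c * ((m : ℝ) + x) ^ 2) := by
  refine Summable.of_nonneg_of_le (fun m ↦ (Real.exp_pos _).le) (fun m ↦ ?_)
    (((gauss_summable (by positivity : (0:ℝ) < c / 2)).mul_left (Real.exp (c * x ^ 2))).congr
      fun m ↦ (Real.exp_add _ _).symm)
  apply Real.exp_le_exp.mpr
  nlinarith [sq_nonneg ((m : ℝ) + 2 * x)]

lemma theta_shift {A : ℝ} (hA : 0 < A) (x : ℝ) :
    ∑' m : ℤ, Real.exp (-π * A * ((m : ℝ) + x) ^ 2)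
      = (1 / A) ^ ((1:ℝ) / 2) *
        ∑' m : ℤ, Real.exp (-π / A * (m : ℝ) ^ 2) * Real.cos (2 * π * (m : ℝ) * x) := by
  have h1A : (0:ℝ) < 1 / A := by positivity
  set a : ℂ := ((1 / A : ℝ) : ℂ) with ha_def
  have ha : 0 < a.re := by rw [Complex.ofReal_re]; exact h1A
  have ha0 : a ≠ 0 := by
    simp only [ha_def, ne_eq, Complex.ofReal_eq_zero]; positivity
  have key := Complex.tsum_exp_neg_quadratic ha (-Complex.I * (x:ℂ))
  -- rewrite the RHS of key as a real sum
  have h2 : ∀ n : ℤ, Complex.exp (-↑π / a * ((n:ℂ) + Complex.I * (-Complex.I * (x:ℂ))) ^ 2)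
      = ((Real.exp (-π * A * ((n:ℝ) + x) ^ 2) : ℝ) : ℂ) := by
    intro n
    rw [Complex.ofReal_exp]
    congr 1
    have hI : Complex.I * (-Complex.I * (x:ℂ)) = (x:ℂ) := by
      rw [← mul_assoc, mul_neg, Complex.I_mul_I]; ring
    rw [hI, ha_def]
    have hA' : (A:ℂ) ≠ 0 := by
      simp only [ne_eq, Complex.ofReal_eq_zero]; exact hA.ne'
    push_cast
    field_simp
  -- the real part of each LHS term of key
  have h3 : ∀ n : ℤ, (Complex.exp (-↑π * a * (n:ℂ) ^ 2 + 2 * ↑π * (-Complex.I * (x:ℂ)) * (n:ℂ))).re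
      = Real.exp (-π / A * (n:ℝ) ^ 2) * Real.cos (2 * π * (n:ℝ) * x) := by
    intro n
    have hz : -↑π * a * (n:ℂ) ^ 2 + 2 * ↑π * (-Complex.I * (x:ℂ)) * (n:ℂ)
        = ((-π / A * (n:ℝ) ^ 2 : ℝ) : ℂ) + ((-(2 * π * (n:ℝ) * x) : ℝ) : ℂ) * Complex.I := by
      rw [ha_def]; push_cast; ring
    rw [hz, Complex.exp_re]
    simp only [Complex.add_re, Complex.ofReal_re, Complex.mul_re, Complex.ofReal_im,
      Complex.I_re, Complex.I_im, Complex.add_im, Complex.mul_im]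
    rw [show -π / A * (n:ℝ) ^ 2 + (-(2 * π * (n:ℝ) * x) * 0 - 0 * 1) = -π / A * (n:ℝ) ^ 2 by ring,
      show 0 + (-(2 * π * (n:ℝ) * x) * 1 + 0 * 0) = -(2 * π * (n:ℝ) * x) by ring, Real.cos_neg]
  -- summability of the LHS terms of key
  have hsum : Summable fun n : ℤ ↦
      Complex.exp (-↑π * a * (n:ℂ) ^ 2 + 2 * ↑π * (-Complex.I * (x:ℂ)) * (n:ℂ)) := by
    apply Summable.of_norm
    have : ∀ n : ℤ, ‖Complex.exp (-↑π * a * (n:ℂ) ^ 2 + 2 * ↑π * (-Complex.I * (x:ℂ)) * (n:ℂ))‖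
        = Real.exp (-(π / A) * (n:ℝ) ^ 2) := by
      intro n
      rw [Complex.norm_exp]
      congr 1
      have hz : -↑π * a * (n:ℂ) ^ 2 + 2 * ↑π * (-Complex.I * (x:ℂ)) * (n:ℂ)
          = ((-(π / A) * (n:ℝ) ^ 2 : ℝ) : ℂ) + ((-(2 * π * (n:ℝ) * x) : ℝ) : ℂ) * Complex.I := by
        rw [ha_def]; push_cast; ring
      rw [hz]
      simp only [Complex.add_re, Complex.ofReal_re, Complex.mul_I_re, Complex.ofReal_im, neg_zero,
        add_zero]
    exact (gauss_summable (by positivity : (0:ℝ) < π / A)).congr fun n ↦ (this n).symm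
  -- rearrange key
  have key2 : ((∑' m : ℤ, Real.exp (-π * A * ((m:ℝ) + x) ^ 2) : ℝ) : ℂ)
      = a ^ ((1:ℂ) / 2) *
        ∑' n : ℤ, Complex.exp (-↑π * a * (n:ℂ) ^ 2 + 2 * ↑π * (-Complex.I * (x:ℂ)) * (n:ℂ)) := by
    rw [key, ← mul_assoc, mul_one_div, div_self (by
        intro h
        exact ha0 ((Complex.cpow_eq_zero_iff a _).mp h).1), one_mul, Complex.ofReal_tsum]
    exact tsum_congr fun n ↦ (h2 n).symm
  have hpow : a ^ ((1:ℂ) / 2) = (((1 / A) ^ ((1:ℝ)/2) : ℝ) : ℂ) := by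
    rw [ha_def, Complex.ofReal_cpow h1A.le]
    norm_num
  have := congrArg Complex.re key2
  rw [Complex.ofReal_re, hpow, Complex.re_ofReal_mul, Complex.re_tsum hsum,
    tsum_congr h3] at this
  exact this

lemma inner_key (n : ℕ) (hn : 0 < n) (α β γ : ℝ) (hα : 0 < α) (hβ : 0 < β)
    (hαβ : α * β = 1 / (2 * n)) (k : ℤ) :
    ∑' l : ℤ, Real.exp (-(π / 2) * (((k : ℝ) / β) ^ 2 + ((l : ℝ) / α + (k : ℝ) * γ / β) ^ 2))
      = Real.sqrt 2 * α * ∑' m : ℤ,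
          Real.exp (-2 * π * α ^ 2 * ((m : ℝ) ^ 2 + (k : ℝ) ^ 2 * (n : ℝ) ^ 2)) *
            Real.cos (2 * π * (k : ℝ) * (m : ℝ) * (α / β) * γ) := by
  have hn' : (0:ℝ) < (n:ℝ) := by exact_mod_cast hn
  have h2n : (2 * (n:ℝ)) * (α * β) = 1 := by rw [hαβ]; field_simp
  have hβ1 : 1 / β = 2 * (n:ℝ) * α := by
    rw [div_eq_iff hβ.ne']
    linear_combination -h2n
  have hβinv : β⁻¹ = 2 * (n:ℝ) * α := by rw [← one_div]; exact hβ1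
  have hA : (0:ℝ) < 1 / (2 * α ^ 2) := by positivity
  have hsplit : ∀ l : ℤ,
      Real.exp (-(π / 2) * (((k : ℝ) / β) ^ 2 + ((l : ℝ) / α + (k : ℝ) * γ / β) ^ 2))
      = Real.exp (-(π / 2) * ((k : ℝ) / β) ^ 2) *
          Real.exp (-π * (1 / (2 * α ^ 2)) * ((l : ℝ) + α * (k : ℝ) * γ / β) ^ 2) := by
    intro l
    rw [← Real.exp_add]
    congr 1
    field_simp
    ring
  rw [tsum_congr hsplit, tsum_mul_left, theta_shift hA, one_div_one_div]
  have h12 : ((2 * α ^ 2) : ℝ) ^ ((1:ℝ) / 2) = Real.sqrt 2 * α := by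
    rw [← Real.sqrt_eq_rpow, Real.sqrt_mul (by norm_num) (α ^ 2), Real.sqrt_sq hα.le]
  rw [h12, mul_left_comm]
  congr 1
  rw [← tsum_mul_left]
  refine tsum_congr fun m ↦ ?_
  rw [← mul_assoc, ← Real.exp_add]
  congr 1
  · congr 1
    simp only [div_eq_mul_inv, hβinv, inv_inv]
    field_simp
    ring
  · congr 1
    simp only [div_eq_mul_inv, hβinv]
    ring

theorem upper_bound_poisson_identity (n : ℕ) (hn : 0 < n) (α β γ : ℝ)
    (hα : 0 < α) (hβ : 0 < β) (hαβ : α * β = 1 / (2 * n))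
    (B : ℝ → ℝ)
    (hB : ∀ γ : ℝ, B γ = (2 * n) * ∑' p : ℤ × ℤ,
      Real.exp (-(π / 2) * (((p.1 : ℝ) / β) ^ 2 + ((p.2 : ℝ) / α + (p.1 : ℝ) * γ / β) ^ 2))) :
    B γ = (2 * n) * Real.sqrt 2 * α * ∑' p : ℤ × ℤ,
      Real.exp (-2 * π * α ^ 2 * ((p.2 : ℝ) ^ 2 + (p.1 : ℝ) ^ 2 * (n : ℝ) ^ 2)) *
        Real.cos (2 * π * (p.1 : ℝ) * (p.2 : ℝ) * (α / β) * γ) := by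
  have hn' : (0:ℝ) < (n:ℝ) := by exact_mod_cast hn
  have hc1 : (0:ℝ) < 2 * π * α ^ 2 := by positivity
  have hc2 : (0:ℝ) < 2 * π * α ^ 2 * (n:ℝ) ^ 2 := by positivity
  have hGsum : Summable (fun p : ℤ × ℤ ↦
      Real.exp (-2 * π * α ^ 2 * ((p.2 : ℝ) ^ 2 + (p.1 : ℝ) ^ 2 * (n : ℝ) ^ 2)) *
        Real.cos (2 * π * (p.1 : ℝ) * (p.2 : ℝ) * (α / β) * γ)) := by
    have hb : Summable (fun p : ℤ × ℤ ↦
        Real.exp (-(2 * π * α ^ 2 * (n:ℝ) ^ 2) * (p.1 : ℝ) ^ 2) *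
          Real.exp (-(2 * π * α ^ 2) * (p.2 : ℝ) ^ 2)) :=
      (gauss_summable hc2).mul_of_nonneg (gauss_summable hc1)
        (fun _ ↦ (Real.exp_pos _).le) (fun _ ↦ (Real.exp_pos _).le)
    refine Summable.of_norm_bounded hb fun p ↦ ?_
    rw [Real.norm_eq_abs, abs_mul, abs_of_pos (Real.exp_pos _)]
    refine le_trans (mul_le_mul_of_nonneg_left (abs_cos_le_one _) (Real.exp_pos _).le) ?_
    rw [mul_one, ← Real.exp_add]
    apply le_of_eq
    congr 1
    ring
  have hGslice : ∀ k : ℤ, Summable fun m : ℤ ↦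
      Real.exp (-2 * π * α ^ 2 * ((m : ℝ) ^ 2 + (k : ℝ) ^ 2 * (n : ℝ) ^ 2)) *
        Real.cos (2 * π * (k : ℝ) * (m : ℝ) * (α / β) * γ) := by
    intro k
    exact hGsum.comp_injective (i := fun m : ℤ ↦ ((k, m) : ℤ × ℤ))
      (fun a b hab ↦ by simpa using congrArg Prod.snd hab)
  have hFslice : ∀ k : ℤ, Summable fun l : ℤ ↦
      Real.exp (-(π / 2) * (((k : ℝ) / β) ^ 2 + ((l : ℝ) / α + (k : ℝ) * γ / β) ^ 2)) := by
    intro k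
    have hA : (0:ℝ) < π * (1 / (2 * α ^ 2)) := by positivity
    refine ((gauss_shift_summable hA (α * (k:ℝ) * γ / β)).mul_left
        (Real.exp (-(π / 2) * ((k : ℝ) / β) ^ 2))).congr fun l ↦ ?_
    rw [← Real.exp_add]
    congr 1
    field_simp
    ring
  have hFsum : Summable (fun p : ℤ × ℤ ↦
      Real.exp (-(π / 2) * (((p.1 : ℝ) / β) ^ 2 + ((p.2 : ℝ) / α + (p.1 : ℝ) * γ / β) ^ 2))) := by
    rw [summable_prod_of_nonneg (fun p ↦ (Real.exp_pos _).le)]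
    refine ⟨hFslice, ?_⟩
    have hC : Summable fun k : ℤ ↦
        Real.sqrt 2 * α * (Real.exp (-(2 * π * α ^ 2 * (n:ℝ) ^ 2) * (k : ℝ) ^ 2) *
          ∑' m : ℤ, Real.exp (-(2 * π * α ^ 2) * (m : ℝ) ^ 2)) :=
      ((gauss_summable hc2).mul_right _).mul_left _
    refine Summable.of_nonneg_of_le (fun k ↦ tsum_nonneg fun l ↦ (Real.exp_pos _).le)
      (fun k ↦ ?_) hC
    rw [inner_key n hn α β γ hα hβ hαβ k]
    refine mul_le_mul_of_nonneg_left ?_ (by positivity)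
    rw [← tsum_mul_left]
    refine Summable.tsum_le_tsum (fun m ↦ ?_) (hGslice k) ((gauss_summable hc1).mul_left _)
    refine le_trans (mul_le_mul_of_nonneg_left (Real.cos_le_one _) (Real.exp_pos _).le) ?_
    rw [mul_one, ← Real.exp_add]
    apply le_of_eq
    congr 1
    ring
  have hmid : (∑' p : ℤ × ℤ,
      Real.exp (-(π / 2) * (((p.1 : ℝ) / β) ^ 2 + ((p.2 : ℝ) / α + (p.1 : ℝ) * γ / β) ^ 2)))
      = Real.sqrt 2 * α * ∑' p : ℤ × ℤ,
        Real.exp (-2 * π * α ^ 2 * ((p.2 : ℝ) ^ 2 + (p.1 : ℝ) ^ 2 * (n : ℝ) ^ 2)) *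
          Real.cos (2 * π * (p.1 : ℝ) * (p.2 : ℝ) * (α / β) * γ) := by
    rw [Summable.tsum_prod' hFsum hFslice, Summable.tsum_prod' hGsum hGslice,
      tsum_congr (fun k ↦ inner_key n hn α β γ hα hβ hαβ k), tsum_mul_left]
  rw [hB γ, hmid]
  ring
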